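/- Let μ̂, δ̂, χ̂, ĉ, a11, a12, a21, a22 be real numbers with a11 ≤ 0, a22 ≤ 0, a21 ≤ 0, a12 ≥ 0, μ̂ > 0, χ̂ ≥ 0, δ̂ ≥ 0, and δ̂ − a22 > 0. Then every eigenvalue λ ∈ ℂ of the 2×2 complex matrix A with rows (a11 − μ̂ − i·ĉ, a12 + χ̂) and (a21, a22 − δ̂) satisfies Re λ < 0. -/
import Mathlib


/-- Under the sign conditions a11 ≤ 0, a22 ≤ 0, a21 ≤ 0, a12 ≥ 0 (and positive
diffusivities), every eigenvalue of the 2×2 stability matrix has negative real part. -/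
theorem stmt_3 (mu de ch c a11 a12 a21 a22 : ℝ)
    (ha11 : a11 ≤ 0) (ha22 : a22 ≤ 0) (ha21 : a21 ≤ 0) (ha12 : 0 ≤ a12)
    (hmu : 0 < mu) (hch : 0 ≤ ch) (hde : 0 ≤ de) (hde22 : 0 < de - a22) :
    let A : Matrix (Fin 2) (Fin 2) ℂ :=
      !![(a11 : ℂ) - (mu : ℂ) - Complex.I * (c : ℂ), (a12 : ℂ) + (ch : ℂ);
         (a21 : ℂ), (a22 : ℂ) - (de : ℂ)]
    ∀ (lam : ℂ) (v : Fin 2 → ℂ), v ≠ 0 → A.mulVec v = lam • v → lam.re < 0 := by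
  intro A lam v hv hAv
  have h0' := congrFun hAv 0
  have h1' := congrFun hAv 1
  simp only [A] at h0' h1'
  simp [Matrix.mulVec, dotProduct, Fin.sum_univ_two] at h0' h1'
  -- normalize to clean equations
  have h0 : ((a11:ℂ) - mu - Complex.I * c) * v 0 + ((a12:ℂ) + ch) * v 1 = lam * v 0 := by
    linear_combination h0'
  have h1 : (a21:ℂ) * v 0 + ((a22:ℂ) - de) * v 1 = lam * v 1 := by
    linear_combination h1'
  by_cases hv0 : v 0 = 0
  · have hv1 : v 1 ≠ 0 := by
      intro hv1
      apply hv
      funext i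
      fin_cases i <;> simp [hv0, hv1]
    rw [hv0] at h1
    have : lam = (a22 : ℂ) - de := by
      rcases mul_eq_zero.mp
          (show (((a22:ℂ) - de) - lam) * v 1 = 0 by linear_combination h1) with h | h
      · exact (sub_eq_zero.mp h).symm
      · exact absurd h hv1
    rw [this]
    simp
    linarith
  · by_cases hv1 : v 1 = 0
    · rw [hv1] at h0
      have : lam = (a11 : ℂ) - mu - Complex.I * c := by
        rcases mul_eq_zero.mp
            (show (((a11:ℂ) - mu - Complex.I * c) - lam) * v 0 = 0 by
              linear_combination h0) with h | h
        · exact (sub_eq_zero.mp h).symm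
        · exact absurd h hv0
      rw [this]
      simp [Complex.sub_re, Complex.mul_re]
      linarith
    · -- main case: both components nonzero
      have e0 : (lam - ((a11:ℂ) - mu - Complex.I * c)) * v 0 = ((a12:ℂ) + ch) * v 1 := by
        linear_combination -h0
      have e1 : (lam - ((a22:ℂ) - de)) * v 1 = (a21 : ℂ) * v 0 := by
        linear_combination -h1
      have key : (lam - ((a11:ℂ) - mu - Complex.I * c)) * (lam - ((a22:ℂ) - de))
          = ((a12:ℂ) + ch) * a21 := by
        have hvv : v 0 * v 1 ≠ 0 := mul_ne_zero hv0 hv1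
        apply mul_right_cancel₀ hvv
        calc (lam - ((a11:ℂ) - mu - Complex.I * c)) * (lam - ((a22:ℂ) - de)) * (v 0 * v 1)
            = ((lam - ((a11:ℂ) - mu - Complex.I * c)) * v 0) * ((lam - ((a22:ℂ) - de)) * v 1) := by
              ring
          _ = (((a12:ℂ) + ch) * v 1) * ((a21 : ℂ) * v 0) := by rw [e0, e1]
          _ = ((a12:ℂ) + ch) * a21 * (v 0 * v 1) := by ring
      have hre := congrArg Complex.re key
      have him := congrArg Complex.im key
      simp [Complex.mul_re, Complex.mul_im, Complex.sub_re, Complex.sub_im] at hre him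
      by_contra hx
      push_neg at hx
      set x := lam.re with hxdef
      set y := lam.im with hydef
      have hp2 : 0 < x - (a11 - mu) := by linarith
      have hp1 : 0 < x - (a22 - de) := by linarith
      have hr : (a12 + ch) * a21 ≤ 0 :=
        mul_nonpos_of_nonneg_of_nonpos (by linarith) ha21
      nlinarith [mul_pos (mul_pos hp1 hp1) hp2, mul_nonneg hp2.le (sq_nonneg y),
        mul_pos hp1 hp2, sq_nonneg y, sq_nonneg (y + c), mul_nonneg hp1.le (sq_nonneg (y+c)),
        mul_nonneg hp2.le (sq_nonneg (y+c))]
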